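/- Multiplicity Permutation theorem: Let p < q be prime numbers, let a, b be positive integers, and let m be a positive integer coprime to both p and q. Set n = p^a · q^b · m and n* = p^b · q^a · m. If a < b, then n* < n and σ(n*)/n* > σ(n)/n; if a > b, then n* > n and σ(n*)/n* < σ(n)/n. -/

import Mathlib

open Real Finset

lemma mp_c1R (P Q : ℝ) (hP : 2 ≤ P) (hQ : P + 1 ≤ Q) : ∀ a : ℕ, 1 ≤ a →
    P ^ (a + 2) ≤ (P - 1) * Q ^ (a + 1) + 1 := by
  intro a ha
  induction a with
  | zero => omega
  | succ n ih =>
    rcases Nat.eq_or_lt_of_le ha with h1 | h1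
    · have hn : n = 0 := by omega
      subst hn
      have h2 : (P + 1) ^ 2 ≤ Q ^ 2 := by nlinarith
      have h3 : (P - 1) * (P + 1) ^ 2 ≤ (P - 1) * Q ^ 2 :=
        mul_le_mul_of_nonneg_left h2 (by linarith)
      have h4 : (0:ℝ) ≤ P * (P - 1) := mul_nonneg (by linarith) (by linarith)
      norm_num
      nlinarith [h3, h4]
    · have hn : 1 ≤ n := by omega
      have IH := ih hn
      have hQpos : (0:ℝ) ≤ Q := by linarith
      have ht : P ^ 2 ≤ P ^ (n + 2) := pow_le_pow_right₀ (by linarith) (by omega)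
      have ht1 : (1:ℝ) ≤ P ^ (n + 2) := by nlinarith
      have key : Q * P ^ (n + 2) + 1 ≥ P ^ (n + 3) + Q := by
        have e : P ^ (n + 3) = P * P ^ (n + 2) := by ring
        nlinarith [mul_nonneg (by linarith : (0:ℝ) ≤ Q - P - 1) (by linarith : (0:ℝ) ≤ P ^ (n+2) - 1),
          mul_nonneg (by linarith : (0:ℝ) ≤ P) (by linarith : (0:ℝ) ≤ P - 1)]
      have step : Q * ((P - 1) * Q ^ (n + 1) + 1) = (P - 1) * Q ^ (n + 2) + Q := by ring
      nlinarith [mul_le_mul_of_nonneg_left IH hQpos]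

lemma mp_core4 (P X Y U V : ℝ) (hP : 2 ≤ P)
    (hX : 2 ≤ X) (hU : 2 ≤ U) (hV : 2 ≤ V) (hY1 : 1 ≤ Y)
    (k1 : (X - 1) * P ≤ (Y - 1) * (P - 1))
    (k2 : U * (P - 1) ≤ (U - 1) * P) :
    (X - 1) * (V * Y - 1) * U < (U * X - 1) * (Y - 1) * V := by
  have hP0 : (0:ℝ) < P := by linarith
  have k3 : (X - 1) * U ≤ (Y - 1) * (U - 1) := by
    have h1 : (X - 1) * P * U ≤ (Y - 1) * (P - 1) * U :=
      mul_le_mul_of_nonneg_right k1 (by linarith)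
    have h2 : (Y - 1) * (U * (P - 1)) ≤ (Y - 1) * ((U - 1) * P) :=
      mul_le_mul_of_nonneg_left k2 (by linarith)
    have h3 : (X - 1) * U * P ≤ (Y - 1) * (U - 1) * P := by nlinarith [h1, h2]
    exact le_of_mul_le_mul_right h3 hP0
  have k3V : (X - 1) * U * V ≤ (Y - 1) * (U - 1) * V :=
    mul_le_mul_of_nonneg_right k3 (by linarith)
  have k5 : (X - 1) * U * (V - 1) < (X - 1) * U * V := by nlinarith
  nlinarith [k3V, k5]

lemma mp_coreN (p q : ℕ) (hp : p.Prime) (hq : q.Prime) (hpq : p < q)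
    (a d : ℕ) (ha : 0 < a) (hd : 0 < d) :
    ArithmeticFunction.sigma 1 (p ^ a) * ArithmeticFunction.sigma 1 (q ^ (a + d)) *
      (p ^ (a + d) * q ^ a) <
    ArithmeticFunction.sigma 1 (p ^ (a + d)) * ArithmeticFunction.sigma 1 (q ^ a) *
      (p ^ a * q ^ (a + d)) := by
  rw [← Nat.cast_lt (α := ℝ)]
  push_cast
  set P : ℝ := (p : ℝ) with hPdef
  set Q : ℝ := (q : ℝ) with hQdef
  have hP : (2:ℝ) ≤ P := by rw [hPdef]; exact_mod_cast hp.two_le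
  have hQ : P + 1 ≤ Q := by rw [hPdef, hQdef]; exact_mod_cast Nat.succ_le_of_lt hpq
  have hgp : ∀ k : ℕ, (ArithmeticFunction.sigma 1 (p ^ k) : ℝ) * (P - 1) = P ^ (k + 1) - 1 := by
    intro k
    rw [ArithmeticFunction.sigma_one_apply_prime_pow hp]
    push_cast
    exact geom_sum_mul P (k + 1)
  have hgq : ∀ k : ℕ, (ArithmeticFunction.sigma 1 (q ^ k) : ℝ) * (Q - 1) = Q ^ (k + 1) - 1 := by
    intro k
    rw [ArithmeticFunction.sigma_one_apply_prime_pow hq]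
    push_cast
    exact geom_sum_mul Q (k + 1)
  have hQ1 : (1:ℝ) ≤ Q := by linarith
  have hX : (2:ℝ) ≤ P ^ (a + 1) := le_trans hP (le_self_pow₀ (by linarith) (by omega))
  have hU : (2:ℝ) ≤ P ^ d := le_trans hP (le_self_pow₀ (by linarith) (by omega))
  have hV : (2:ℝ) ≤ Q ^ d := le_trans (by linarith) (le_self_pow₀ hQ1 (by omega))
  have hY1 : (1:ℝ) ≤ Q ^ (a + 1) := one_le_pow₀ hQ1
  have k1 : (P ^ (a + 1) - 1) * P ≤ (Q ^ (a + 1) - 1) * (P - 1) := by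
    have h := mp_c1R P Q hP hQ a ha
    have e : P ^ (a + 2) = P * P ^ (a + 1) := by ring
    nlinarith [h]
  have k2 : P ^ d * (P - 1) ≤ (P ^ d - 1) * P := by
    have : P ≤ P ^ d := le_self_pow₀ (by linarith) (by omega)
    nlinarith
  have key := mp_core4 P (P ^ (a + 1)) (Q ^ (a + 1)) (P ^ d) (Q ^ d) hP hX hU hV hY1 k1 k2
  -- now assemble
  have hPQpos : (0:ℝ) < (P - 1) * (Q - 1) := by nlinarith
  have hpow : (0:ℝ) < P ^ a * Q ^ a := by positivity
  rw [← mul_lt_mul_iff_left₀ hPQpos]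
  have e1 : (ArithmeticFunction.sigma 1 (p ^ a) : ℝ) * (ArithmeticFunction.sigma 1 (q ^ (a + d)) : ℝ) *
      (P ^ (a + d) * Q ^ a) * ((P - 1) * (Q - 1)) =
      (P ^ (a + 1) - 1) * (Q ^ d * Q ^ (a + 1) - 1) * P ^ d * (P ^ a * Q ^ a) := by
    calc (ArithmeticFunction.sigma 1 (p ^ a) : ℝ) * (ArithmeticFunction.sigma 1 (q ^ (a + d)) : ℝ) *
        (P ^ (a + d) * Q ^ a) * ((P - 1) * (Q - 1))
        = ((ArithmeticFunction.sigma 1 (p ^ a) : ℝ) * (P - 1)) *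
          ((ArithmeticFunction.sigma 1 (q ^ (a + d)) : ℝ) * (Q - 1)) * (P ^ (a + d) * Q ^ a) := by
          ring
      _ = (P ^ (a + 1) - 1) * (Q ^ (a + d + 1) - 1) * (P ^ (a + d) * Q ^ a) := by
          rw [hgp a, hgq (a + d)]
      _ = (P ^ (a + 1) - 1) * (Q ^ d * Q ^ (a + 1) - 1) * P ^ d * (P ^ a * Q ^ a) := by
          rw [show a + d + 1 = d + (a + 1) by omega, pow_add Q d (a + 1), pow_add P a d]; ring
  have e2 : (ArithmeticFunction.sigma 1 (p ^ (a + d)) : ℝ) * (ArithmeticFunction.sigma 1 (q ^ a) : ℝ) *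
      (P ^ a * Q ^ (a + d)) * ((P - 1) * (Q - 1)) =
      (P ^ d * P ^ (a + 1) - 1) * (Q ^ (a + 1) - 1) * Q ^ d * (P ^ a * Q ^ a) := by
    calc (ArithmeticFunction.sigma 1 (p ^ (a + d)) : ℝ) * (ArithmeticFunction.sigma 1 (q ^ a) : ℝ) *
        (P ^ a * Q ^ (a + d)) * ((P - 1) * (Q - 1))
        = ((ArithmeticFunction.sigma 1 (p ^ (a + d)) : ℝ) * (P - 1)) *
          ((ArithmeticFunction.sigma 1 (q ^ a) : ℝ) * (Q - 1)) * (P ^ a * Q ^ (a + d)) := by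
          ring
      _ = (P ^ (a + d + 1) - 1) * (Q ^ (a + 1) - 1) * (P ^ a * Q ^ (a + d)) := by
          rw [hgp (a + d), hgq a]
      _ = (P ^ d * P ^ (a + 1) - 1) * (Q ^ (a + 1) - 1) * Q ^ d * (P ^ a * Q ^ a) := by
          rw [show a + d + 1 = d + (a + 1) by omega, pow_add P d (a + 1), pow_add Q a d]; ring
  rw [e1, e2]
  calc (P ^ (a + 1) - 1) * (Q ^ d * Q ^ (a + 1) - 1) * P ^ d * (P ^ a * Q ^ a)
      < (P ^ d * P ^ (a + 1) - 1) * (Q ^ (a + 1) - 1) * Q ^ d * (P ^ a * Q ^ a) :=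
        mul_lt_mul_of_pos_right key hpow

lemma mp_main (p q : ℕ) (hp : p.Prime) (hq : q.Prime) (hpq : p < q)
    (a b : ℕ) (ha : 0 < a) (hab : a < b)
    (m : ℕ) (hm : 0 < m) (hmp : Nat.Coprime m p) (hmq : Nat.Coprime m q) :
    p ^ b * q ^ a * m < p ^ a * q ^ b * m ∧
    (ArithmeticFunction.sigma 1 (p ^ a * q ^ b * m) : ℝ) / (p ^ a * q ^ b * m : ℝ) <
      (ArithmeticFunction.sigma 1 (p ^ b * q ^ a * m) : ℝ) / (p ^ b * q ^ a * m : ℝ) := by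
  obtain ⟨d, hd, rfl⟩ : ∃ d, 0 < d ∧ b = a + d := ⟨b - a, by omega, by omega⟩
  have hp0 : 0 < p := hp.pos
  have hq0 : 0 < q := hq.pos
  have hpd : p ^ d < q ^ d := Nat.pow_lt_pow_left hpq (by omega)
  have hpos : 0 < p ^ a * q ^ a := by positivity
  have hsize : p ^ (a + d) * q ^ a < p ^ a * q ^ (a + d) := by
    calc p ^ (a + d) * q ^ a = p ^ a * q ^ a * p ^ d := by rw [pow_add]; ring
      _ < p ^ a * q ^ a * q ^ d := mul_lt_mul_of_pos_left hpd hpos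
      _ = p ^ a * q ^ (a + d) := by rw [pow_add]; ring
  constructor
  · exact mul_lt_mul_of_pos_right hsize hm
  · have hpqcop : ∀ x y : ℕ, Nat.Coprime (p ^ x) (q ^ y) := fun x y =>
      ((Nat.coprime_primes hp hq).mpr hpq.ne).pow x y
    have hcm : ∀ x y : ℕ, Nat.Coprime (p ^ x * q ^ y) m := fun x y =>
      Nat.Coprime.mul (hmp.symm.pow_left x) (hmq.symm.pow_left y)
    have hσ : ∀ x y : ℕ, ArithmeticFunction.sigma 1 (p ^ x * q ^ y * m) =
        ArithmeticFunction.sigma 1 (p ^ x) * ArithmeticFunction.sigma 1 (q ^ y) *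
        ArithmeticFunction.sigma 1 m := fun x y => by
      rw [ArithmeticFunction.isMultiplicative_sigma.map_mul_of_coprime (hcm x y),
        ArithmeticFunction.isMultiplicative_sigma.map_mul_of_coprime (hpqcop x y)]
    have hσm : 0 < ArithmeticFunction.sigma 1 m := by
      rw [ArithmeticFunction.sigma_one_apply]
      exact Finset.sum_pos (fun i hi => Nat.pos_of_mem_divisors hi)
        (Nat.nonempty_divisors.mpr hm.ne')
    have hn1 : (0:ℝ) < (p:ℝ) ^ a * (q:ℝ) ^ (a + d) * (m:ℝ) := by positivity
    have hn2 : (0:ℝ) < (p:ℝ) ^ (a + d) * (q:ℝ) ^ a * (m:ℝ) := by positivity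
    rw [div_lt_div_iff₀ hn1 hn2]
    have natineq : ArithmeticFunction.sigma 1 (p ^ a * q ^ (a + d) * m) *
        (p ^ (a + d) * q ^ a * m) <
        ArithmeticFunction.sigma 1 (p ^ (a + d) * q ^ a * m) * (p ^ a * q ^ (a + d) * m) := by
      rw [hσ a (a + d), hσ (a + d) a]
      have core := mp_coreN p q hp hq hpq a d ha hd
      calc ArithmeticFunction.sigma 1 (p ^ a) * ArithmeticFunction.sigma 1 (q ^ (a + d)) *
            ArithmeticFunction.sigma 1 m * (p ^ (a + d) * q ^ a * m)
          = ArithmeticFunction.sigma 1 (p ^ a) * ArithmeticFunction.sigma 1 (q ^ (a + d)) *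
            (p ^ (a + d) * q ^ a) * (ArithmeticFunction.sigma 1 m * m) := by ring
        _ < ArithmeticFunction.sigma 1 (p ^ (a + d)) * ArithmeticFunction.sigma 1 (q ^ a) *
            (p ^ a * q ^ (a + d)) * (ArithmeticFunction.sigma 1 m * m) :=
            mul_lt_mul_of_pos_right core (by positivity)
        _ = ArithmeticFunction.sigma 1 (p ^ (a + d)) * ArithmeticFunction.sigma 1 (q ^ a) *
            ArithmeticFunction.sigma 1 m * (p ^ a * q ^ (a + d) * m) := by ring
    exact_mod_cast natineq

theorem multiplicity_permutation (p q : ℕ) (hp : p.Prime) (hq : q.Prime) (hpq : p < q)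
    (a b : ℕ) (ha : 0 < a) (hb : 0 < b)
    (m : ℕ) (hm : 0 < m) (hmp : Nat.Coprime m p) (hmq : Nat.Coprime m q) :
    (a < b →
      p ^ b * q ^ a * m < p ^ a * q ^ b * m ∧
      (ArithmeticFunction.sigma 1 (p ^ a * q ^ b * m) : ℝ) / (p ^ a * q ^ b * m : ℝ) <
        (ArithmeticFunction.sigma 1 (p ^ b * q ^ a * m) : ℝ) / (p ^ b * q ^ a * m : ℝ)) ∧
    (b < a →
      p ^ a * q ^ b * m < p ^ b * q ^ a * m ∧
      (ArithmeticFunction.sigma 1 (p ^ b * q ^ a * m) : ℝ) / (p ^ b * q ^ a * m : ℝ) <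
        (ArithmeticFunction.sigma 1 (p ^ a * q ^ b * m) : ℝ) / (p ^ a * q ^ b * m : ℝ)) := by
  constructor
  · intro hab
    exact mp_main p q hp hq hpq a b ha hab m hm hmp hmq
  · intro hba
    exact mp_main p q hp hq hpq b a hb hba m hm hmp hmq
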